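/- Let A be a C*-algebra and let a ∈ A with polar decomposition a = v(a*a)^{1/2} in the enveloping von Neumann algebra A**. Set B = closure((a*a)A(a*a)) and C = closure((aa*)A(aa*)). Then the map φ(x) = v x v* defines a *-isomorphism from B onto C with φ(a*a) = aa*, and for every positive x ∈ B, x is Cuntz equivalent to φ(x) in A. -/

import Mathlib

open Filter Topology

open Filter Topology

namespace CuntzAux

/-- The approximating functions `g n t = √t · n/(1+n|t|)`. -/
noncomputable def gseq (n : ℕ) (t : ℝ) : ℝ := Real.sqrt t * ((n : ℝ) / (1 + n * |t|))

lemma gseq_cont (n : ℕ) : Continuous (gseq n) := by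
  apply Real.continuous_sqrt.mul
  apply continuous_const.div (by fun_prop)
  intro t; positivity

lemma gseq_zero (n : ℕ) : gseq n 0 = 0 := by simp [gseq]

lemma gseq_est {n : ℕ} (hn : 1 ≤ (n : ℝ)) {t : ℝ} (ht : 0 ≤ t) :
    ‖t * gseq n t - Real.sqrt t‖ ≤ 1 / Real.sqrt n := by
  have hd : (0:ℝ) < 1 + n * t := by positivity
  have h1 : t * gseq n t - Real.sqrt t = -(Real.sqrt t / (1 + n * t)) := by
    rw [gseq, abs_of_nonneg ht]
    field_simp
    ring
  rw [Real.norm_eq_abs, h1, abs_neg, abs_of_nonneg (by positivity)]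
  rw [div_le_div_iff₀ hd (by positivity)]
  have h2 : Real.sqrt t * Real.sqrt n = Real.sqrt (n * t) := by
    rw [mul_comm (n:ℝ) t, Real.sqrt_mul ht]
  have h3 : Real.sqrt (n * t) ^ 2 = n * t := Real.sq_sqrt (by positivity)
  nlinarith [Real.sqrt_nonneg ((n:ℝ) * t), sq_nonneg (Real.sqrt ((n:ℝ) * t) - 1)]

lemma tendsto_one_div_sqrt : Tendsto (fun n : ℕ => 1 / Real.sqrt n) atTop (𝓝 0) := by
  have hs : Tendsto Real.sqrt atTop atTop := by
    apply tendsto_atTop_atTop_of_monotone (fun x y h => Real.sqrt_le_sqrt h)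
    intro c
    exact ⟨(max c 0) ^ 2, by rw [Real.sqrt_sq (le_max_right c 0)]; exact le_max_left _ _⟩
  simpa [one_div, Pi.inv_def, Function.comp_def] using (hs.comp tendsto_natCast_atTop_atTop).inv_tendsto_atTop

variable {W : Type*} [NonUnitalCStarAlgebra W] [PartialOrder W] [StarOrderedRing W]

lemma tendsto_tg (b : W) (hb : 0 ≤ b) :
    Tendsto (fun n : ℕ => cfcₙ (fun t => t * gseq n t) b) atTop (𝓝 (cfcₙ Real.sqrt b)) := by
  have hbsa : IsSelfAdjoint b := .of_nonneg hb
  rw [tendsto_iff_norm_sub_tendsto_zero]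
  apply squeeze_zero' (Eventually.of_forall fun n => norm_nonneg _)
    ?_ tendsto_one_div_sqrt
  filter_upwards [eventually_ge_atTop 1] with n hn
  rw [← cfcₙ_sub (fun t : ℝ => t * gseq n t) Real.sqrt b
    (by exact (continuous_id.mul (gseq_cont n)).continuousOn)
    (by simp [gseq_zero]) Real.continuous_sqrt.continuousOn Real.sqrt_zero]
  apply norm_cfcₙ_le
  intro x hx
  exact gseq_est (by exact_mod_cast hn) (quasispectrum_nonneg_of_nonneg b hb x hx)

lemma cfc_sqrt_mul_self (b : W) (hb : 0 ≤ b) :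
    cfcₙ Real.sqrt b * cfcₙ Real.sqrt b = b := by
  have hbsa : IsSelfAdjoint b := .of_nonneg hb
  rw [← cfcₙ_mul Real.sqrt Real.sqrt b Real.continuous_sqrt.continuousOn Real.sqrt_zero
    Real.continuous_sqrt.continuousOn Real.sqrt_zero]
  have h := cfcₙ_congr (a := b) (f := fun x : ℝ => Real.sqrt x * Real.sqrt x) (g := id)
    (fun x hx => Real.mul_self_sqrt (quasispectrum_nonneg_of_nonneg b hb x hx))
  rw [h, cfcₙ_id ℝ b hbsa]

lemma cfc_tg_eq (b : W) (hbsa : IsSelfAdjoint b) (n : ℕ) :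
    cfcₙ (fun t => t * gseq n t) b = b * cfcₙ (gseq n) b := by
  rw [cfcₙ_mul (fun t : ℝ => t) (gseq n) b continuous_id.continuousOn rfl
    (gseq_cont n).continuousOn (gseq_zero n), cfcₙ_id' ℝ b hbsa]

lemma cfc_tg_eq' (b : W) (hbsa : IsSelfAdjoint b) (n : ℕ) :
    cfcₙ (fun t => t * gseq n t) b = cfcₙ (gseq n) b * b := by
  rw [show (fun t : ℝ => t * gseq n t) = fun t => gseq n t * t from funext fun t => mul_comm _ _,
    cfcₙ_mul (gseq n) (fun t : ℝ => t) b (gseq_cont n).continuousOn (gseq_zero n)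
      continuous_id.continuousOn rfl, cfcₙ_id' ℝ b hbsa]

open scoped ContinuousMapZero in
lemma cfcₙ_mem_of_isClosed (A : NonUnitalStarSubalgebra ℂ W) (hA : IsClosed (A : Set W))
    {b : W} (hb : b ∈ A) (hbsa : IsSelfAdjoint b) (f : ℝ → ℝ)
    (hf : Continuous f) (hf0 : f 0 = 0) : cfcₙ f b ∈ A := by
  rw [cfcₙ_apply (R := ℝ) f b hf.continuousOn hf0 hbsa]
  set g : C(quasispectrum ℝ b, ℝ)₀ := ⟨⟨_, hf.continuousOn.restrict⟩, hf0⟩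
  have hdense := ContinuousMapZero.adjoin_id_dense (quasispectrum ℝ b)
  have hclosed : IsClosed ((cfcₙHom (R := ℝ) hbsa) ⁻¹' (A : Set W)) :=
    hA.preimage (cfcₙHom_continuous (R := ℝ) hbsa)
  have hsub : (NonUnitalStarAlgebra.adjoin ℝ
      {(ContinuousMapZero.id (quasispectrum ℝ b) : C(quasispectrum ℝ b, ℝ)₀)} : Set _) ⊆
      (cfcₙHom (R := ℝ) hbsa) ⁻¹' (A : Set W) := by
    intro q hq
    induction hq using NonUnitalStarAlgebra.adjoin_induction with
    | mem x hx =>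
      rw [Set.mem_singleton_iff] at hx
      subst hx
      show cfcₙHom (R := ℝ) hbsa _ ∈ A
      rw [cfcₙHom_id hbsa]
      exact hb
    | add x y hx hy hx' hy' =>
      show cfcₙHom (R := ℝ) hbsa _ ∈ A
      rw [map_add]; exact A.add_mem hx' hy'
    | zero =>
      show cfcₙHom (R := ℝ) hbsa _ ∈ A
      rw [map_zero]; exact A.zero_mem
    | mul x y hx hy hx' hy' =>
      show cfcₙHom (R := ℝ) hbsa _ ∈ A
      rw [map_mul]; exact A.mul_mem hx' hy'
    | smul c x hx hx' =>
      show cfcₙHom (R := ℝ) hbsa _ ∈ A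
      rw [map_smul, ← algebraMap_smul ℂ c (cfcₙHom (R := ℝ) hbsa x)]
      exact SMulMemClass.smul_mem _ hx'
    | star x hx hx' =>
      show cfcₙHom (R := ℝ) hbsa _ ∈ A
      rw [map_star]; exact star_mem hx'
  exact hclosed.closure_subset_iff.mpr hsub (hdense g)

end CuntzAux


open CuntzAux in
/-- Cuntz equivalence of `x` and `y` witnessed inside the subset `S`:
there is `c ∈ S` with `c*c = x` and `cc* = y`. -/
def CuntzEquivIn {W : Type*} [NonUnitalCStarAlgebra W] (S : Set W) (x y : W) : Prop :=
  ∃ c ∈ S, star c * c = x ∧ c * star c = y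

open Filter Topology CuntzAux in
/-- Polar decomposition lemma: let `A` be a (closed) C*-subalgebra of `W`
(playing the role of `A ⊆ A**`), `a ∈ A`, and let `v ∈ W` satisfy the polar
decomposition identities `a = v (a*a)^{1/2}` and `v* a = (a*a)^{1/2}`.  With
`B = closure((a*a) A (a*a))` and `C = closure((aa*) A (aa*))`, the map
`φ(x) = v x v*` is a *-isomorphism of `B` onto `C` with `φ(a*a) = aa*`, and
`x ∼ φ(x)` (Cuntz equivalence in `A`) for every positive `x ∈ B`. -/
theorem stmt3 {W : Type*} [NonUnitalCStarAlgebra W] [PartialOrder W] [StarOrderedRing W]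
    (A : NonUnitalStarSubalgebra ℂ W) (hA : IsClosed (A : Set W))
    (a : W) (ha : a ∈ A) (v : W)
    (hv1 : a = v * cfcₙ Real.sqrt (star a * a))
    (hv2 : star v * a = cfcₙ Real.sqrt (star a * a)) :
    letI B : Set W := closure {y : W | ∃ z ∈ A, y = (star a * a) * z * (star a * a)}
    letI C : Set W := closure {y : W | ∃ z ∈ A, y = (a * star a) * z * (a * star a)}
    letI φ : W → W := fun x => v * x * star v
    Set.BijOn φ B C ∧
      (∀ x ∈ B, ∀ y ∈ B, φ (x + y) = φ x + φ y) ∧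
      (∀ x ∈ B, ∀ y ∈ B, φ (x * y) = φ x * φ y) ∧
      (∀ x ∈ B, φ (star x) = star (φ x)) ∧
      (∀ (c : ℂ), ∀ x ∈ B, φ (c • x) = c • φ x) ∧
      φ (star a * a) = a * star a ∧
      (∀ x ∈ B, 0 ≤ x → CuntzEquivIn (A : Set W) x (φ x)) := by
  have hs_nonneg : (0 : W) ≤ star a * a := star_mul_self_nonneg a
  have hs_sa : IsSelfAdjoint (star a * a) := IsSelfAdjoint.star_mul_self a
  have hsA : star a * a ∈ A := mul_mem (star_mem ha) ha
  set r := cfcₙ Real.sqrt (star a * a) with hr_def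
  have hr_sa : IsSelfAdjoint r := hr_def ▸ cfcₙ_predicate Real.sqrt (star a * a)
  have hrr : r * r = star a * a := CuntzAux.cfc_sqrt_mul_self _ hs_nonneg
  have hrA : r ∈ A := hr_def ▸ CuntzAux.cfcₙ_mem_of_isClosed A hA hsA hs_sa _
    Real.continuous_sqrt Real.sqrt_zero
  have hstar_a : star a = r * star v := by rw [hv1, star_mul, hr_sa.star_eq]
  have hvvr : star v * v * r = r := by rw [mul_assoc, ← hv1, hv2]
  have hrvv : r * (star v * v) = r := by
    have h := congrArg star hvvr
    rw [star_mul, star_mul, star_star, hr_sa.star_eq] at h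
    exact h
  have hvva : v * star v * a = a := by rw [mul_assoc, hv2, ← hv1]
  have hsav : star a * v = r := by
    have h := congrArg star hv2
    rw [star_mul, star_star, hr_sa.star_eq] at h
    exact h
  have hvvs : star v * v * (star a * a) = star a * a := by
    rw [← hrr, ← mul_assoc, hvvr]
  have hsvv : star a * a * (star v * v) = star a * a := by
    rw [← hrr, mul_assoc, hrvv]
  have hcvv : v * star v * (a * star a) = a * star a := by
    rw [← mul_assoc, hvva]
  have hvvc : a * star a * (v * star v) = a * star a := by
    rw [mul_assoc, ← mul_assoc (star a) v (star v), hsav, ← hstar_a]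
  set B0 : Set W := {y : W | ∃ z ∈ A, y = (star a * a) * z * (star a * a)} with hB0_def
  set C0 : Set W := {y : W | ∃ z ∈ A, y = (a * star a) * z * (a * star a)} with hC0_def
  -- invariance on closures
  have hBl : ∀ x ∈ closure B0, star v * v * x = x := by
    have hsubset : closure B0 ⊆ {x : W | star v * v * x = x} := by
      refine closure_minimal ?_ (isClosed_eq (by fun_prop) continuous_id)
      rintro y ⟨z, hz, rfl⟩
      show star v * v * (star a * a * z * (star a * a)) = star a * a * z * (star a * a)
      calc star v * v * (star a * a * z * (star a * a))
          = (star v * v * (star a * a)) * (z * (star a * a)) := by simp only [mul_assoc]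
        _ = (star a * a) * (z * (star a * a)) := by rw [hvvs]
        _ = star a * a * z * (star a * a) := by simp only [mul_assoc]
    exact fun x hx => hsubset hx
  have hBr : ∀ x ∈ closure B0, x * (star v * v) = x := by
    have hsubset : closure B0 ⊆ {x : W | x * (star v * v) = x} := by
      refine closure_minimal ?_ (isClosed_eq (by fun_prop) continuous_id)
      rintro y ⟨z, hz, rfl⟩
      show star a * a * z * (star a * a) * (star v * v) = star a * a * z * (star a * a)
      calc star a * a * z * (star a * a) * (star v * v)
          = (star a * a) * (z * ((star a * a) * (star v * v))) := by simp only [mul_assoc]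
        _ = (star a * a) * (z * (star a * a)) := by rw [hsvv]
        _ = star a * a * z * (star a * a) := by simp only [mul_assoc]
    exact fun x hx => hsubset hx
  have hCl : ∀ y ∈ closure C0, v * star v * y = y := by
    have hsubset : closure C0 ⊆ {x : W | v * star v * x = x} := by
      refine closure_minimal ?_ (isClosed_eq (by fun_prop) continuous_id)
      rintro y ⟨z, hz, rfl⟩
      show v * star v * (a * star a * z * (a * star a)) = a * star a * z * (a * star a)
      calc v * star v * (a * star a * z * (a * star a))
          = (v * star v * (a * star a)) * (z * (a * star a)) := by simp only [mul_assoc]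
        _ = (a * star a) * (z * (a * star a)) := by rw [hcvv]
        _ = a * star a * z * (a * star a) := by simp only [mul_assoc]
    exact fun y hy => hsubset hy
  have hCr : ∀ y ∈ closure C0, y * (v * star v) = y := by
    have hsubset : closure C0 ⊆ {x : W | x * (v * star v) = x} := by
      refine closure_minimal ?_ (isClosed_eq (by fun_prop) continuous_id)
      rintro y ⟨z, hz, rfl⟩
      show a * star a * z * (a * star a) * (v * star v) = a * star a * z * (a * star a)
      calc a * star a * z * (a * star a) * (v * star v)
          = (a * star a) * (z * ((a * star a) * (v * star v))) := by simp only [mul_assoc]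
        _ = (a * star a) * (z * (a * star a)) := by rw [hvvc]
        _ = a * star a * z * (a * star a) := by simp only [mul_assoc]
    exact fun y hy => hsubset hy
  -- cfcₙ approximation data for s = star a * a
  have hGn : ∀ n : ℕ, cfcₙ (gseq n) (star a * a) ∈ A := fun n =>
    CuntzAux.cfcₙ_mem_of_isClosed A hA hsA hs_sa _ (gseq_cont n) (gseq_zero n)
  have htd : Tendsto (fun n : ℕ => cfcₙ (fun t => t * gseq n t) (star a * a)) atTop (𝓝 r) := by
    have h := CuntzAux.tendsto_tg (star a * a) hs_nonneg
    rwa [← hr_def] at h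
  have hpn : ∀ n : ℕ, cfcₙ (fun t => t * gseq n t) (star a * a)
      = (star a * a) * cfcₙ (gseq n) (star a * a) := fun n => CuntzAux.cfc_tg_eq _ hs_sa n
  have hpn' : ∀ n : ℕ, cfcₙ (fun t => t * gseq n t) (star a * a)
      = cfcₙ (gseq n) (star a * a) * (star a * a) := fun n => CuntzAux.cfc_tg_eq' _ hs_sa n
  -- key approximation lemmas
  have hrur : ∀ u ∈ A, r * u * r ∈ closure B0 := by
    intro u hu
    have htend2 : Tendsto (fun n : ℕ => cfcₙ (fun t => t * gseq n t) (star a * a) * u *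
        cfcₙ (fun t => t * gseq n t) (star a * a)) atTop (𝓝 (r * u * r)) :=
      (htd.mul_const u).mul htd
    refine mem_closure_of_tendsto htend2 (Eventually.of_forall fun n => ?_)
    refine ⟨cfcₙ (gseq n) (star a * a) * u * cfcₙ (gseq n) (star a * a),
      mul_mem (mul_mem (hGn n) hu) (hGn n), ?_⟩
    nth_rewrite 2 [hpn' n]
    rw [hpn n]
    simp only [mul_assoc]
  have hara : ∀ z ∈ A, a * (r * z * r) * star a ∈ closure C0 := by
    intro z hz
    have htend3 : Tendsto (fun n : ℕ => a * (cfcₙ (fun t => t * gseq n t) (star a * a) * z *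
        cfcₙ (fun t => t * gseq n t) (star a * a)) * star a) atTop
        (𝓝 (a * (r * z * r) * star a)) :=
      (((htd.mul_const z).mul htd).const_mul a).mul_const (star a)
    refine mem_closure_of_tendsto htend3 (Eventually.of_forall fun n => ?_)
    refine ⟨a * (cfcₙ (gseq n) (star a * a) * z * cfcₙ (gseq n) (star a * a)) * star a,
      mul_mem (mul_mem ha (mul_mem (mul_mem (hGn n) hz) (hGn n))) (star_mem ha), ?_⟩
    nth_rewrite 2 [hpn' n]
    rw [hpn n]
    simp only [mul_assoc]
  -- the map φ sends B into C, and ψ sends C into B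
  have hmaps : ∀ x ∈ closure B0, v * x * star v ∈ closure C0 := by
    intro x hx
    have h1 : Set.MapsTo (fun w => v * w * star v) B0 (closure C0) := by
      rintro y ⟨z, hz, rfl⟩
      show v * (star a * a * z * (star a * a)) * star v ∈ closure C0
      have he : v * (star a * a * z * (star a * a)) * star v = a * (r * z * r) * star a := by
        rw [← hrr, hstar_a, hv1]
        simp only [mul_assoc]
      rw [he]
      exact hara z hz
    have h2 := map_mem_closure (by fun_prop) hx h1
    rwa [closure_closure] at h2
  have hpsi : ∀ y ∈ closure C0, star v * y * v ∈ closure B0 := by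
    intro y hy
    have h1 : Set.MapsTo (fun w => star v * w * v) C0 (closure B0) := by
      rintro w ⟨z, hz, rfl⟩
      show star v * (a * star a * z * (a * star a)) * v ∈ closure B0
      have he : star v * (a * star a * z * (a * star a)) * v = r * (star a * z * a) * r := by
        calc star v * (a * star a * z * (a * star a)) * v
            = (star v * a) * ((star a * z * a) * (star a * v)) := by simp only [mul_assoc]
          _ = r * ((star a * z * a) * r) := by rw [hv2, hsav]
          _ = r * (star a * z * a) * r := by simp only [mul_assoc]
      rw [he]
      exact hrur (star a * z * a) (mul_mem (mul_mem (star_mem ha) hz) ha)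
    have h2 := map_mem_closure (by fun_prop) hy h1
    rwa [closure_closure] at h2
  refine ⟨⟨fun x hx => hmaps x hx, ?_, ?_⟩, ?_, ?_, ?_, ?_, ?_, ?_⟩
  · -- InjOn
    intro x hx y hy hxy
    have hxy' : v * x * star v = v * y * star v := hxy
    have ex : ∀ w ∈ closure B0, star v * (v * w * star v) * v = w := by
      intro w hw
      calc star v * (v * w * star v) * v
          = (star v * v * w) * (star v * v) := by simp only [mul_assoc]
        _ = w * (star v * v) := by rw [hBl w hw]
        _ = w := hBr w hw
    rw [← ex x hx, ← ex y hy, hxy']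
  · -- SurjOn
    intro y hy
    refine ⟨star v * y * v, hpsi y hy, ?_⟩
    show v * (star v * y * v) * star v = y
    calc v * (star v * y * v) * star v
        = (v * star v * y) * (v * star v) := by simp only [mul_assoc]
      _ = y * (v * star v) := by rw [hCl y hy]
      _ = y := hCr y hy
  · -- additive
    intro x hx y hy
    show v * (x + y) * star v = v * x * star v + v * y * star v
    rw [mul_add, add_mul]
  · -- multiplicative
    intro x hx y hy
    show v * (x * y) * star v = (v * x * star v) * (v * y * star v)
    have hmid : x * (star v * v * y) = x * y := by rw [hBl y hy]
    rw [← hmid]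
    simp only [mul_assoc]
  · -- star
    intro x hx
    show v * star x * star v = star (v * x * star v)
    simp only [star_mul, star_star, mul_assoc]
  · -- smul
    intro c x hx
    show v * (c • x) * star v = c • (v * x * star v)
    rw [mul_smul_comm, smul_mul_assoc]
  · -- φ (a* a) = a a*
    show v * (star a * a) * star v = a * star a
    rw [← hrr, hstar_a, hv1]
    simp only [mul_assoc]
  · -- Cuntz equivalence
    intro x hx hx0
    show CuntzEquivIn (A : Set W) x (v * x * star v)
    have hB0A : B0 ⊆ (A : Set W) := by
      rintro y ⟨z, hz, rfl⟩
      exact mul_mem (mul_mem hsA hz) hsA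
    have hxA : x ∈ A := by
      have h := closure_mono hB0A hx
      rwa [hA.closure_eq] at h
    have hx_sa : IsSelfAdjoint x := .of_nonneg hx0
    set q := cfcₙ Real.sqrt x with hq_def
    have hqq : q * q = x := CuntzAux.cfc_sqrt_mul_self x hx0
    have hq_sa : IsSelfAdjoint q := hq_def ▸ cfcₙ_predicate Real.sqrt x
    have hGx : ∀ n : ℕ, cfcₙ (gseq n) x ∈ A := fun n =>
      CuntzAux.cfcₙ_mem_of_isClosed A hA hxA hx_sa _ (gseq_cont n) (gseq_zero n)
    have htdx : Tendsto (fun n : ℕ => x * cfcₙ (gseq n) x) atTop (𝓝 q) := by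
      have h := CuntzAux.tendsto_tg x hx0
      rw [← hq_def] at h
      have heq : (fun n : ℕ => cfcₙ (fun u => u * gseq n u) x)
          = fun n : ℕ => x * cfcₙ (gseq n) x := funext fun n => CuntzAux.cfc_tg_eq x hx_sa n
      rwa [heq] at h
    have hvx : v * x ∈ A := by
      have h1 : Set.MapsTo (fun w => v * w) B0 (A : Set W) := by
        rintro y ⟨z, hz, rfl⟩
        show v * (star a * a * z * (star a * a)) ∈ A
        have he : v * (star a * a * z * (star a * a)) = a * (r * (z * (r * r))) := by
          rw [← hrr, hv1]
          simp only [mul_assoc]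
        rw [he]
        exact mul_mem ha (mul_mem hrA (mul_mem hz (mul_mem hrA hrA)))
      have h2 := map_mem_closure (by fun_prop) hx h1
      rwa [hA.closure_eq] at h2
    have hvq : v * q ∈ A := by
      have h2 : Tendsto (fun n : ℕ => v * x * cfcₙ (gseq n) x) atTop (𝓝 (v * q)) := by
        have h := htdx.const_mul v
        simpa only [mul_assoc] using h
      exact hA.mem_of_tendsto h2 (Eventually.of_forall fun n => mul_mem hvx (hGx n))
    have hvvx : star v * v * x = x := hBl x hx
    have hvvq : star v * v * q = q := by
      have h3 : Tendsto (fun n : ℕ => x * cfcₙ (gseq n) x) atTop (𝓝 (star v * v * q)) := by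
        have h := htdx.const_mul (star v * v)
        have heq : (fun n : ℕ => star v * v * (x * cfcₙ (gseq n) x))
            = fun n : ℕ => x * cfcₙ (gseq n) x := by
          funext n
          rw [← mul_assoc, hvvx]
        rwa [heq] at h
      exact tendsto_nhds_unique h3 htdx
    refine ⟨v * q, hvq, ?_, ?_⟩
    · rw [star_mul, hq_sa.star_eq]
      calc q * star v * (v * q) = q * (star v * v * q) := by simp only [mul_assoc]
        _ = q * q := by rw [hvvq]
        _ = x := hqq
    · rw [star_mul, hq_sa.star_eq]
      calc v * q * (q * star v) = v * (q * q) * star v := by simp only [mul_assoc]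
        _ = v * x * star v := by rw [hqq]
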